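/- Let Q satisfy (Q1)–(Q3), and define R_M := (2MC_M/(C_α D^S_M))², where C_α < 0 and C_M > 0 are the constants from the splitting estimate. If (f_n) ⊂ F^S_M is a minimizing sequence for D, then for every R > R_M, lim_{n→∞} ∫_{|x|≥R} ∫ f_n dv dx = 0; i.e. along any minimizing sequence the mass concentrates in the disc of radius R_M. -/

import Mathlib

open MeasureTheory

local notation "E2" => EuclideanSpace ℝ (Fin 2)

/-- Kinetic energy plus Casimir functional. -/
noncomputable def Pfunc (Q : ℝ → ℝ) (f : E2 × E2 → ℝ) : ℝ :=
  (1/2) * (∫ p : E2 × E2, ‖p.2‖^2 * f p) + ∫ p : E2 × E2, Q (f p)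

/-- Potential energy of a flat density. -/
noncomputable def EpotF (f : E2 × E2 → ℝ) : ℝ :=
  -(1/2) * ∫ x : E2, ∫ y : E2, (∫ v : E2, f (x, v)) * (∫ w : E2, f (y, w)) / ‖x - y‖

/-- Energy-Casimir functional. -/
noncomputable def Dfunc (Q : ℝ → ℝ) (f : E2 × E2 → ℝ) : ℝ := Pfunc Q f + EpotF f

/-- Axial symmetry: invariance under simultaneous rotation of `x` and `v`. -/
def AxialSym (f : E2 × E2 → ℝ) : Prop :=
  ∀ A : Matrix (Fin 2) (Fin 2) ℝ, A ∈ Matrix.specialOrthogonalGroup (Fin 2) ℝ →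
    ∀ x v : E2, f (WithLp.toLp 2 (A.mulVec x), WithLp.toLp 2 (A.mulVec v)) = f (x, v)

/-- The axially symmetric constraint set `F^S_M`. -/
def FMSset (Q : ℝ → ℝ) (M : ℝ) : Set (E2 × E2 → ℝ) :=
  {f | Measurable f ∧ (∀ p, 0 ≤ f p) ∧ Integrable f ∧ (∫ p, f p) = M ∧
    Integrable (fun p : E2 × E2 => ‖p.2‖^2 * f p) ∧
    Integrable (fun p : E2 × E2 => Q (f p)) ∧ AxialSym f}

/-- Outer mass beyond radius `r`. -/
noncomputable def bmass (g : E2 → ℝ) (r : ℝ) : ℝ := ∫ x in {x : E2 | r < ‖x‖}, g x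

lemma bmass_def (g : E2 → ℝ) (r : ℝ) :
    bmass g r = ∫ x in {x : E2 | r < ‖x‖}, g x := rfl

lemma sphere_null (r : ℝ) : volume {x : E2 | ‖x‖ = r} = 0 := by
  have h : {x : E2 | ‖x‖ = r} = Metric.sphere (0 : E2) r := by
    ext x; simp [dist_zero_right]
  rw [h]
  exact Measure.addHaar_sphere volume 0 r

lemma le_ae_eq_lt (r : ℝ) :
    {x : E2 | r ≤ ‖x‖} =ᵐ[volume] {x : E2 | r < ‖x‖} := by
  rw [MeasureTheory.ae_eq_set]
  constructor
  · refine measure_mono_null ?_ (sphere_null r)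
    intro x hx
    simp only [Set.mem_diff, Set.mem_setOf_eq, not_lt] at hx
    exact le_antisymm hx.2 hx.1
  · refine measure_mono_null ?_ (sphere_null r)
    intro x hx
    simp only [Set.mem_diff, Set.mem_setOf_eq, not_le] at hx
    exact absurd hx.2 (not_lt.2 hx.1.le)

lemma measlt (r : ℝ) : MeasurableSet {x : E2 | r < ‖x‖} :=
  measurableSet_lt measurable_const measurable_norm

lemma measlt' (r : ℝ) : MeasurableSet {x : E2 | ‖x‖ < r} :=
  measurableSet_lt measurable_norm measurable_const

lemma bmass_nonneg (g : E2 → ℝ) (hg0 : ∀ x, 0 ≤ g x) (r : ℝ) : 0 ≤ bmass g r :=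
  setIntegral_nonneg (measlt r) fun x _ => hg0 x

lemma bmass_anti (g : E2 → ℝ) (hg : Integrable g) (hg0 : ∀ x, 0 ≤ g x) :
    Antitone (bmass g) := by
  intro r r' h
  refine setIntegral_mono_set hg.integrableOn
    (Filter.Eventually.of_forall fun x => hg0 x)
    (Filter.Eventually.of_forall fun x hx => ?_)
  exact lt_of_le_of_lt h hx

lemma inner_eq (g : E2 → ℝ) (hg : Integrable g) {M : ℝ} (hgM : (∫ x, g x) = M) (r : ℝ) :
    (∫ x in {x : E2 | ‖x‖ < r}, g x) = M - bmass g r := by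
  have hcompl : ({x : E2 | ‖x‖ < r})ᶜ = {x : E2 | r ≤ ‖x‖} := by
    ext x; simp [not_lt]
  have h := integral_add_compl (measlt' r) hg
  rw [hcompl, setIntegral_congr_set (le_ae_eq_lt r), hgM, ← bmass_def] at h
  linarith

lemma bmass_exists_small (g : E2 → ℝ) (hg : Integrable g) {M : ℝ}
    (hgM : (∫ x, g x) = M) (hM : 0 < M) (R : ℝ) :
    ∃ r : ℝ, R ≤ r ∧ bmass g r ≤ M / 2 := by
  have hu : (⋃ k : ℕ, {x : E2 | ‖x‖ < (k : ℝ)}) = Set.univ := by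
    ext x
    simp only [Set.mem_iUnion, Set.mem_setOf_eq, Set.mem_univ, iff_true]
    exact exists_nat_gt ‖x‖
  have hmono : Monotone fun k : ℕ => {x : E2 | ‖x‖ < (k : ℝ)} := by
    intro k m hkm x hx
    simp only [Set.mem_setOf_eq] at hx ⊢
    exact lt_of_lt_of_le hx (by exact_mod_cast hkm)
  have ht := tendsto_setIntegral_of_monotone (fun k : ℕ => measlt' _) hmono
    (by rw [hu]; exact hg.integrableOn)
  rw [hu, setIntegral_univ, hgM] at ht
  have h1 : ∀ᶠ k : ℕ in Filter.atTop, M / 2 < ∫ x in {x : E2 | ‖x‖ < (k : ℝ)}, g x :=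
    ht.eventually (eventually_gt_nhds (by linarith))
  have h2 : ∀ᶠ k : ℕ in Filter.atTop, R ≤ (k : ℝ) :=
    tendsto_natCast_atTop_atTop.eventually_ge_atTop R
  obtain ⟨k, hk1, hk2⟩ := (h1.and h2).exists
  refine ⟨(k : ℝ), hk2, ?_⟩
  have h3 := inner_eq g hg hgM (k : ℝ)
  linarith

lemma one_div_succ_anti {k m : ℕ} (hkm : k ≤ m) :
    1 / ((m : ℝ) + 1) ≤ 1 / ((k : ℝ) + 1) := by
  apply one_div_le_one_div_of_le (by positivity)
  linarith [(Nat.cast_le (α := ℝ)).2 hkm]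

lemma bmass_rlim (g : E2 → ℝ) (hg : Integrable g) (r : ℝ) :
    Filter.Tendsto (fun k : ℕ => bmass g (r + 1 / ((k : ℝ) + 1)))
      Filter.atTop (nhds (bmass g r)) := by
  have hu : (⋃ k : ℕ, {x : E2 | r + 1 / ((k : ℝ) + 1) < ‖x‖}) = {x : E2 | r < ‖x‖} := by
    ext x
    simp only [Set.mem_iUnion, Set.mem_setOf_eq]
    constructor
    · rintro ⟨k, hk⟩
      have h0 : 0 < 1 / ((k : ℝ) + 1) := by positivity
      linarith
    · intro hx
      obtain ⟨k, hk⟩ := exists_nat_one_div_lt (sub_pos.2 hx)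
      exact ⟨k, by linarith⟩
  have hmono : Monotone fun k : ℕ => {x : E2 | r + 1 / ((k : ℝ) + 1) < ‖x‖} := by
    intro k m hkm x hx
    simp only [Set.mem_setOf_eq] at hx ⊢
    have h1 := one_div_succ_anti (show k ≤ m from hkm)
    linarith
  have ht := tendsto_setIntegral_of_monotone (fun k : ℕ => measlt _) hmono
    (by rw [hu]; exact hg.integrableOn)
  rw [hu] at ht
  exact ht

lemma bmass_llim (g : E2 → ℝ) (hg : Integrable g) (r : ℝ) :
    Filter.Tendsto (fun k : ℕ => bmass g (r - 1 / ((k : ℝ) + 1)))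
      Filter.atTop (nhds (bmass g r)) := by
  have hi : (⋂ k : ℕ, {x : E2 | r - 1 / ((k : ℝ) + 1) < ‖x‖}) = {x : E2 | r ≤ ‖x‖} := by
    ext x
    simp only [Set.mem_iInter, Set.mem_setOf_eq]
    constructor
    · intro h
      by_contra hlt
      push_neg at hlt
      obtain ⟨k, hk⟩ := exists_nat_one_div_lt (sub_pos.2 hlt)
      have := h k
      linarith
    · intro h k
      have h0 : 0 < 1 / ((k : ℝ) + 1) := by positivity
      linarith
  have hanti : Antitone fun k : ℕ => {x : E2 | r - 1 / ((k : ℝ) + 1) < ‖x‖} := by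
    intro k m hkm x hx
    simp only [Set.mem_setOf_eq] at hx ⊢
    have h1 := one_div_succ_anti (show k ≤ m from hkm)
    linarith
  have ht := tendsto_setIntegral_of_antitone (fun k : ℕ => measlt _) hanti
    ⟨0, hg.integrableOn⟩
  rw [hi, setIntegral_congr_set (le_ae_eq_lt r)] at ht
  exact ht

/-- Main per-function estimate. -/
lemma key_aux (g : E2 → ℝ) (M c CM R ε : ℝ)
    (hg : Integrable g) (hg0 : ∀ x, 0 ≤ g x) (hgM : (∫ x, g x) = M) (hM : 0 < M)
    (hc : 0 < c) (hCM : 0 < CM) (hR : 0 < R)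
    (hδ : 0 < c * M / 2 - CM / Real.sqrt R)
    (hεsmall : ε < (c * M / 2 - CM / Real.sqrt R) * (M / 2))
    (hsplit : ∀ r : ℝ, 0 < r →
      ε ≥ (c * (∫ x in {x : E2 | ‖x‖ < r}, g x) - CM / Real.sqrt r) *
            ∫ x in {x : E2 | r < ‖x‖}, g x) :
    (∫ x in {x : E2 | R ≤ ‖x‖}, g x) ≤ ε / (c * M / 2 - CM / Real.sqrt R) := by
  have hsplit' : ∀ r : ℝ, 0 < r →
      ε ≥ (c * (M - bmass g r) - CM / Real.sqrt r) * bmass g r := by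
    intro r hr
    have := hsplit r hr
    rwa [inner_eq g hg hgM r, ← bmass_def] at this
  have hsqrt : ∀ r : ℝ, R ≤ r → CM / Real.sqrt r ≤ CM / Real.sqrt R := by
    intro r hr
    have h1 : Real.sqrt R ≤ Real.sqrt r := Real.sqrt_le_sqrt hr
    have h2 : 0 < Real.sqrt R := Real.sqrt_pos.2 hR
    gcongr
  set S : Set ℝ := {r | R ≤ r ∧ bmass g r ≤ M / 2} with hSdef
  have hSne : S.Nonempty := bmass_exists_small g hg hgM hM R
  have hSbdd : BddBelow S := ⟨R, fun r hr => hr.1⟩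
  set r₀ := sInf S with hr₀def
  have hRr₀ : R ≤ r₀ := le_csInf hSne fun r hr => hr.1
  have hr₀pos : 0 < r₀ := lt_of_lt_of_le hR hRr₀
  have hbr₀ : bmass g r₀ ≤ M / 2 := by
    refine le_of_tendsto (bmass_rlim g hg r₀) (Filter.Eventually.of_forall fun k => ?_)
    have h0 : 0 < 1 / ((k : ℝ) + 1) := by positivity
    have hlt : r₀ < r₀ + 1 / ((k : ℝ) + 1) := by linarith
    obtain ⟨s, hsS, hs⟩ := exists_lt_of_csInf_lt hSne hlt
    exact le_trans (bmass_anti g hg hg0 hs.le) hsS.2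
  have hr₀eq : r₀ = R := by
    by_contra hne
    have hRlt : R < r₀ := lt_of_le_of_ne hRr₀ (Ne.symm hne)
    have hbr₀' : M / 2 ≤ bmass g r₀ := by
      refine ge_of_tendsto (bmass_llim g hg r₀) ?_
      have hev : ∀ᶠ k : ℕ in Filter.atTop, 1 / ((k : ℝ) + 1) < r₀ - R := by
        obtain ⟨k₀, hk₀⟩ := exists_nat_one_div_lt (sub_pos.2 hRlt)
        filter_upwards [Filter.eventually_ge_atTop k₀] with k hk
        have h1 := one_div_succ_anti hk
        linarith
      filter_upwards [hev] with k hk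
      have h0 : 0 < 1 / ((k : ℝ) + 1) := by positivity
      have hge : R ≤ r₀ - 1 / ((k : ℝ) + 1) := by linarith
      have hltr₀ : r₀ - 1 / ((k : ℝ) + 1) < r₀ := by linarith
      by_contra hb
      push_neg at hb
      have hmem : r₀ - 1 / ((k : ℝ) + 1) ∈ S := ⟨hge, hb.le⟩
      exact absurd (csInf_le hSbdd hmem) (not_le.2 hltr₀)
    have hbeq : bmass g r₀ = M / 2 := le_antisymm hbr₀ hbr₀'
    have hs := hsplit' r₀ hr₀pos
    rw [hbeq] at hs
    have h3 : CM / Real.sqrt r₀ ≤ CM / Real.sqrt R := hsqrt r₀ hRr₀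
    have h4 : (c * M / 2 - CM / Real.sqrt R) * (M / 2)
        ≤ (c * (M - M / 2) - CM / Real.sqrt r₀) * (M / 2) := by
      apply mul_le_mul_of_nonneg_right _ (by linarith)
      nlinarith
    linarith
  rw [setIntegral_congr_set (le_ae_eq_lt R), ← bmass_def]
  have hbR : bmass g R ≤ M / 2 := hr₀eq ▸ hbr₀
  have hs := hsplit' R hR
  have h4 : (c * M / 2 - CM / Real.sqrt R) ≤ c * (M - bmass g R) - CM / Real.sqrt R := by
    nlinarith
  have h5 : (c * M / 2 - CM / Real.sqrt R) * bmass g R ≤ ε :=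
    le_trans (mul_le_mul_of_nonneg_right h4 (bmass_nonneg g hg0 R)) hs
  rw [le_div_iff₀ hδ]
  linarith [h5]

theorem mass_concentration (Q : ℝ → ℝ) (C₁ C₂ F₀ μ₁ μ₂ μ₃ M : ℝ)
    (hC₁ : 0 < C₁) (hC₂ : 0 < C₂) (hF₀ : 0 < F₀) (hM : 0 < M)
    (hμ₁ : 0 < μ₁ ∧ μ₁ < 1) (hμ₂ : 0 < μ₂ ∧ μ₂ < 1) (hμ₃ : 0 < μ₃ ∧ μ₃ < 1)
    (hQ0 : ∀ f : ℝ, 0 ≤ f → 0 ≤ Q f)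
    (hQ1 : ∀ f : ℝ, F₀ ≤ f → C₁ * f ^ ((1:ℝ) + 1/μ₁) ≤ Q f)
    (hQ2 : ∀ f : ℝ, 0 ≤ f → f ≤ F₀ → Q f ≤ C₂ * f ^ ((1:ℝ) + 1/μ₂))
    (hQ3 : ∀ f : ℝ, 0 ≤ f → ∀ lam : ℝ, 0 ≤ lam → lam ≤ 1 →
      lam ^ ((1:ℝ) + 1/μ₃) * Q f ≤ Q (lam * f))
    (DSM : ℝ) (hDSM : DSM = sInf (Dfunc Q '' FMSset Q M)) (hDSMneg : DSM < 0)
    (Cα CM : ℝ) (hCα : Cα < 0) (hCM : 0 < CM)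
    (hsplit : ∀ f ∈ FMSset Q M, ∀ R : ℝ, 0 < R →
      Dfunc Q f - DSM ≥
        ((Cα * DSM / M^2) * (∫ x in {x : E2 | ‖x‖ < R}, ∫ v : E2, f (x, v))
            - CM / Real.sqrt R) *
          ∫ x in {x : E2 | R < ‖x‖}, ∫ v : E2, f (x, v))
    (RM : ℝ) (hRM : RM = (2 * M * CM / (Cα * DSM))^2)
    (fseq : ℕ → (E2 × E2 → ℝ)) (hfseq : ∀ n, fseq n ∈ FMSset Q M)
    (hmin : Filter.Tendsto (fun n => Dfunc Q (fseq n)) Filter.atTop (nhds DSM)) :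
    ∀ R : ℝ, RM < R →
      Filter.Tendsto
        (fun n => ∫ x in {x : E2 | R ≤ ‖x‖}, ∫ v : E2, fseq n (x, v))
        Filter.atTop (nhds 0) := by
  intro R hRgt
  have hCD : 0 < Cα * DSM := mul_pos_of_neg_of_neg hCα hDSMneg
  have hc : 0 < Cα * DSM / M ^ 2 := div_pos hCD (by positivity)
  have hRMpos : 0 < RM := by
    rw [hRM]; positivity
  have hRpos : 0 < R := lt_trans hRMpos hRgt
  have hsqRM : Real.sqrt RM = 2 * M * CM / (Cα * DSM) := by
    rw [hRM]; exact Real.sqrt_sq (by positivity)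
  have hsqRMpos : 0 < Real.sqrt RM := Real.sqrt_pos.2 hRMpos
  have hkey : CM / Real.sqrt RM = Cα * DSM / M ^ 2 * M / 2 := by
    rw [hsqRM]
    field_simp
  have hlt : CM / Real.sqrt R < Cα * DSM / M ^ 2 * M / 2 := by
    rw [← hkey]
    exact div_lt_div_of_pos_left hCM hsqRMpos (Real.sqrt_lt_sqrt hRMpos.le hRgt)
  have hδpos : 0 < Cα * DSM / M ^ 2 * M / 2 - CM / Real.sqrt R := sub_pos.2 hlt
  have htend0 : Filter.Tendsto (fun n => Dfunc Q (fseq n) - DSM) Filter.atTop (nhds 0) :=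
    tendsto_sub_nhds_zero_iff.2 hmin
  have hgdata : ∀ n, Integrable (fun x : E2 => ∫ v : E2, fseq n (x, v)) ∧
      (∀ x, 0 ≤ ∫ v : E2, fseq n (x, v)) ∧
      (∫ x : E2, ∫ v : E2, fseq n (x, v)) = M := by
    intro n
    obtain ⟨hmeas, hpos, hint, hmass, -, -, -⟩ := hfseq n
    have hint' : Integrable (fseq n) (volume.prod volume) := by
      rwa [← Measure.volume_eq_prod]
    refine ⟨hint'.integral_prod_left, fun x => integral_nonneg fun v => hpos (x, v), ?_⟩
    rw [← integral_prod _ hint', ← Measure.volume_eq_prod]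
    exact hmass
  have hub : ∀ᶠ n in Filter.atTop,
      (∫ x in {x : E2 | R ≤ ‖x‖}, ∫ v : E2, fseq n (x, v))
        ≤ (Dfunc Q (fseq n) - DSM) / (Cα * DSM / M ^ 2 * M / 2 - CM / Real.sqrt R) := by
    have hev : ∀ᶠ n in Filter.atTop,
        Dfunc Q (fseq n) - DSM < (Cα * DSM / M ^ 2 * M / 2 - CM / Real.sqrt R) * (M / 2) :=
      htend0.eventually (eventually_lt_nhds (mul_pos hδpos (by linarith)))
    filter_upwards [hev] with n hn
    obtain ⟨hgint, hg0, hgM⟩ := hgdata n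
    exact key_aux _ M (Cα * DSM / M ^ 2) CM R _ hgint hg0 hgM hM hc hCM hRpos hδpos hn
      (fun r hr => hsplit (fseq n) (hfseq n) r hr)
  refine squeeze_zero' (Filter.Eventually.of_forall fun n => ?_) hub ?_
  · obtain ⟨hgint, hg0, hgM⟩ := hgdata n
    exact setIntegral_nonneg (measurableSet_le measurable_const measurable_norm)
      fun x _ => hg0 x
  · have h := htend0.div_const (Cα * DSM / M ^ 2 * M / 2 - CM / Real.sqrt R)
    simpa using h
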